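/- Let G be the subring of ℂ[[X]] consisting of power series Σ_{n≥0} a_n X^n for which there exist A, C > 0 with |a_n| ≤ A·C^n·n! for all n. Then the localization of G away from the element X (i.e., the ring G[X^{-1}]) is a field, and it is a field of fractions of G (the canonical map G → G[X^{-1}] is injective and exhibits G[X^{-1}] as Frac(G)). -/

import Mathlib

set_option synthInstance.maxHeartbeats 1000000

/-- The Gevrey-type growth condition defining the ring `G = k₀ = W_pt(0)` of the paper
(written in the variable `X = τ⁻¹`): `|a_n| ≤ A·C^n·n!` for some `A, C > 0`. -/
def Gevrey (f : PowerSeries ℂ) : Prop :=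
  ∃ A C : ℝ, 0 < A ∧ 0 < C ∧
    ∀ n : ℕ, ‖PowerSeries.coeff n f‖ ≤ A * C ^ n * n.factorial

open PowerSeries Finset

private lemma fac_mul_fac_le (i j n : ℕ) (h : i + j = n) :
    (i.factorial * j.factorial : ℝ) ≤ (n.factorial : ℝ) := by
  subst h
  exact_mod_cast Nat.le_of_dvd (Nat.factorial_pos _)
    (Nat.factorial_mul_factorial_dvd_factorial_add i j)

private lemma choose_le_two_pow (m k : ℕ) : m.choose k ≤ 2 ^ m := by
  rcases le_or_gt k m with h | h
  · calc m.choose k ≤ ∑ i ∈ range (m + 1), m.choose i :=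
        Finset.single_le_sum (f := fun i => m.choose i) (fun _ _ => Nat.zero_le _)
          (Finset.mem_range.mpr (Nat.lt_succ_of_le h))
    _ = 2 ^ m := Nat.sum_range_choose m
  · rw [Nat.choose_eq_zero_of_lt h]; exact Nat.zero_le _

private lemma fac_add_le (n k : ℕ) :
    ((n + k).factorial : ℝ) ≤ 2 ^ (n + k) * n.factorial * k.factorial := by
  have h1 : (n + k).choose k * k.factorial * n.factorial = (n + k).factorial := by
    have := Nat.choose_mul_factorial_mul_factorial (Nat.le_add_left k n)
    simpa [Nat.add_sub_cancel] using this
  have h2 := choose_le_two_pow (n + k) k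
  have : (n + k).factorial ≤ 2 ^ (n + k) * n.factorial * k.factorial := by
    calc (n + k).factorial = (n + k).choose k * k.factorial * n.factorial := h1.symm
      _ ≤ 2 ^ (n + k) * k.factorial * n.factorial := by
          exact Nat.mul_le_mul_right _ (Nat.mul_le_mul_right _ h2)
      _ = 2 ^ (n + k) * n.factorial * k.factorial := by ring
  exact_mod_cast this

/-- Gevrey series are stable under dropping the first `k` coefficients. -/
private lemma gevrey_shift {f g : PowerSeries ℂ} (k : ℕ)
    (hfg : ∀ n, PowerSeries.coeff n g = PowerSeries.coeff (n + k) f)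
    (hf : Gevrey f) : Gevrey g := by
  obtain ⟨A, C, hA, hC, hb⟩ := hf
  refine ⟨A * C ^ k * 2 ^ k * k.factorial, 2 * C, by positivity, by positivity, fun n => ?_⟩
  rw [hfg]
  calc ‖PowerSeries.coeff (n + k) f‖ ≤ A * C ^ (n + k) * (n + k).factorial := hb _
    _ ≤ A * C ^ (n + k) * (2 ^ (n + k) * n.factorial * k.factorial) := by
        have := fac_add_le n k
        gcongr
    _ = (A * C ^ k * 2 ^ k * k.factorial) * (2 * C) ^ n * n.factorial := by
        rw [pow_add, pow_add, mul_pow]; ring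

/-- The inverse of a Gevrey series with nonzero constant term is Gevrey. -/
private lemma gevrey_inv {f : PowerSeries ℂ} (hf : Gevrey f)
    (h0 : PowerSeries.constantCoeff f ≠ 0) : Gevrey f⁻¹ := by
  obtain ⟨A, C, hA, hC, hb⟩ := hf
  set r : ℝ := ‖(PowerSeries.constantCoeff f)⁻¹‖ with hrdef
  have hr0 : 0 < r := by
    rw [hrdef]; exact norm_pos_iff.mpr (inv_ne_zero h0)
  set D : ℝ := C + A * C * r with hDdef
  have hACr : 0 < A * C * r := by positivity
  have hCD : C < D := by rw [hDdef]; linarith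
  have hD0 : 0 < D := lt_trans hC hCD
  refine ⟨r, D, hr0, hD0, ?_⟩
  intro n
  induction n using Nat.strong_induction_on with
  | _ n ih =>
    rcases Nat.eq_zero_or_pos n with rfl | hn
    · rw [PowerSeries.coeff_inv, if_pos rfl]
      simp only [pow_zero, Nat.factorial_zero, Nat.cast_one, mul_one]
      exact le_of_eq hrdef
    · rw [PowerSeries.coeff_inv, if_neg hn.ne']
      have hgeo : (∑ i ∈ range n, C ^ i * D ^ (n - 1 - i)) * (D - C) = D ^ n - C ^ n := by
        have h := geom_sum₂_mul C D n
        linear_combination -h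
      calc ‖-(PowerSeries.constantCoeff f)⁻¹ *
              ∑ p ∈ antidiagonal n,
                if p.2 < n then
                  PowerSeries.coeff p.1 f * PowerSeries.coeff p.2 f⁻¹ else 0‖
          = r * ‖∑ p ∈ antidiagonal n,
                if p.2 < n then
                  PowerSeries.coeff p.1 f * PowerSeries.coeff p.2 f⁻¹ else 0‖ := by
            rw [norm_mul, norm_neg]
        _ ≤ r * ∑ p ∈ antidiagonal n,
              (if p.2 < n then A * r * (n.factorial : ℝ) * C ^ p.1 * D ^ p.2 else 0) := by
            refine mul_le_mul_of_nonneg_left ?_ hr0.le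
            refine le_trans (norm_sum_le _ _) (Finset.sum_le_sum fun p hp => ?_)
            have hpn : p.1 + p.2 = n := Finset.HasAntidiagonal.mem_antidiagonal.mp hp
            split_ifs with h
            · have h1 := hb p.1
              have h2 := ih p.2 h
              have hfac := fac_mul_fac_le p.1 p.2 n hpn
              calc ‖PowerSeries.coeff p.1 f * PowerSeries.coeff p.2 f⁻¹‖
                  = ‖PowerSeries.coeff p.1 f‖ * ‖PowerSeries.coeff p.2 f⁻¹‖ :=
                    norm_mul _ _
                _ ≤ (A * C ^ p.1 * p.1.factorial) * (r * D ^ p.2 * p.2.factorial) := by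
                    exact mul_le_mul h1 h2 (norm_nonneg _) (by positivity)
                _ = (A * r * (C ^ p.1 * D ^ p.2)) * (p.1.factorial * p.2.factorial) := by
                    ring
                _ ≤ (A * r * (C ^ p.1 * D ^ p.2)) * (n.factorial : ℝ) := by
                    exact mul_le_mul_of_nonneg_left hfac (by positivity)
                _ = A * r * (n.factorial : ℝ) * C ^ p.1 * D ^ p.2 := by ring
            · simp
        _ = r * ∑ i ∈ range (n + 1),
              (if n - i < n then A * r * (n.factorial : ℝ) * C ^ i * D ^ (n - i) else 0) := by
            rw [Finset.Nat.sum_antidiagonal_eq_sum_range_succ_mk]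
        _ = r * ∑ i ∈ range n, A * r * (n.factorial : ℝ) * (C * C ^ i) * D ^ (n - 1 - i) := by
            rw [Finset.sum_range_succ']
            congr 1
            rw [if_neg (by simp)]
            rw [add_zero]
            refine Finset.sum_congr rfl fun i hi => ?_
            have hi' : i < n := Finset.mem_range.mp hi
            rw [if_pos (Nat.sub_lt hn (Nat.succ_pos i))]
            rw [show n - (i + 1) = n - 1 - i by omega, pow_succ]
            ring
        _ = r * (A * r * (n.factorial : ℝ) * C *
              (∑ i ∈ range n, C ^ i * D ^ (n - 1 - i))) := by
            rw [Finset.mul_sum, Finset.mul_sum, Finset.mul_sum]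
            exact Finset.sum_congr rfl fun i _ => by ring
        _ ≤ r * D ^ n * n.factorial := by
            have hDC : D - C = A * C * r := by rw [hDdef]; ring
            have hkey : (∑ i ∈ range n, C ^ i * D ^ (n - 1 - i)) * (A * C * r)
                = D ^ n - C ^ n := by rw [← hDC]; exact hgeo
            have heq : r * (A * r * (n.factorial : ℝ) * C *
                (∑ i ∈ range n, C ^ i * D ^ (n - 1 - i)))
                = r * (n.factorial : ℝ) * (D ^ n - C ^ n) := by
              rw [← hkey]; ring
            rw [heq]
            have hCn : (0:ℝ) ≤ r * (n.factorial : ℝ) * C ^ n := by positivity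
            nlinarith [hCn]

/-- the localization `G[X⁻¹]` of `G` away from `X` is a field, and it is a
field of fractions of `G` (the canonical map `G → G[X⁻¹]` is injective and realizes
`G[X⁻¹]` as `Frac(G)`).  Here `G` is realized as a subalgebra `S` of `ℂ[[X]]` and
`x ∈ S` is the element `X`. -/
theorem gevrey_localization_away_X_is_fraction_field (S : Subalgebra ℂ (PowerSeries ℂ))
    (hS : (S : Set (PowerSeries ℂ)) = {f | Gevrey f})
    (x : S) (hx : (x : PowerSeries ℂ) = PowerSeries.X) :
    IsField (Localization.Away x) ∧ IsFractionRing S (Localization.Away x) := by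
  have hmem : ∀ f : PowerSeries ℂ, f ∈ S ↔ Gevrey f := fun f => by
    rw [← SetLike.mem_coe, hS]; rfl
  have hx0 : x ≠ 0 := by
    intro h
    apply PowerSeries.X_ne_zero (R := ℂ)
    rw [← hx, h]
    rfl
  -- every nonzero element of `S` divides a power of `x`
  have key : ∀ s : S, s ≠ 0 → ∃ (t : S) (n : ℕ), x ^ n = s * t := by
    intro s hs
    have hf : (s : PowerSeries ℂ) ≠ 0 := fun h => hs (Subtype.ext h)
    have hGf : Gevrey (s : PowerSeries ℂ) := (hmem _).1 s.2
    set f := (s : PowerSeries ℂ) with hfdef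
    set k := f.order.lift (order_finite_iff_ne_zero.mpr hf) with hkdef
    set u := divXPowOrder f with hudef
    have hfu : X ^ k * u = f := by
      rw [hkdef, ENat.lift_eq_toNat_of_lt_top]; exact X_pow_order_mul_divXPowOrder
    have hGu : Gevrey u := by
      refine gevrey_shift k (fun n => ?_) hGf
      rw [← hfu]
      exact (coeff_X_pow_mul u k n).symm
    have hu0 : PowerSeries.constantCoeff u ≠ 0 := by
      have : (firstUnitCoeff hf : ℂ) = PowerSeries.constantCoeff u := rfl
      rw [← this]
      exact Units.ne_zero _
    have huinv : u * u⁻¹ = 1 := PowerSeries.mul_inv_cancel u hu0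
    have hGuinv : Gevrey u⁻¹ := gevrey_inv hGu hu0
    have hv : u⁻¹ ∈ S := (hmem _).2 hGuinv
    refine ⟨x ^ k * ⟨u⁻¹, hv⟩, 2 * k, Subtype.ext ?_⟩
    push_cast
    rw [hx]
    calc (PowerSeries.X : PowerSeries ℂ) ^ (2 * k) = (X ^ k * X ^ k) * (u * u⁻¹) := by
          rw [huinv, mul_one, ← pow_add, two_mul]
      _ = (X ^ k * u) * (X ^ k * u⁻¹) := by ring
      _ = f * (X ^ k * u⁻¹) := by rw [hfu]
  have hle : Submonoid.powers x ≤ nonZeroDivisors S :=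
    powers_le_nonZeroDivisors_of_noZeroDivisors hx0
  haveI hfr : IsFractionRing S (Localization.Away x) := by
    refine IsLocalization.of_le_of_exists_dvd (Submonoid.powers x) (nonZeroDivisors S) hle ?_
    intro s hs
    obtain ⟨t, n, h⟩ := key s (nonZeroDivisors.ne_zero hs)
    exact ⟨x ^ n, Submonoid.pow_mem _ (Submonoid.mem_powers x) n, ⟨t, h⟩⟩
  refine ⟨?_, hfr⟩
  letI : Field (Localization.Away x) := IsFractionRing.toField S
  exact Field.toIsField _
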